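/- Soundness of P[⊥] (⊥ as superuser): if Γ ⊢ φ in P[⊥] and ⟨I, M⟩ is a model with the additional closure condition that ff ∈ M implies a ∈ M for all a, and v(Γ) ⊆ M, then v(φ) ∈ M. -/
import Mathlib


/-- Infons: formulas built from atoms, ⊤, ⊥, conjunction and primal implication. -/
inductive Infon : Type
  | atom : ℕ → Infon
  | top : Infon
  | bot : Infon
  | and : Infon → Infon → Infon
  | imp : Infon → Infon → Infon
deriving DecidableEq

/-- Derivability in the basic primal infon logic P (⊥ is an ordinary atom, no rule for it). -/
inductive DerP : Set Infon → Infon → Prop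
  | top (Γ : Set Infon) : DerP Γ .top
  | id (φ : Infon) : DerP {φ} φ
  | weak {Γ φ} (Δ : Set Infon) : DerP Γ φ → DerP (Γ ∪ Δ) φ
  | cut {Γ φ ψ} : DerP Γ φ → DerP (insert φ Γ) ψ → DerP Γ ψ
  | andI {Γ φ ψ} : DerP Γ φ → DerP Γ ψ → DerP Γ (.and φ ψ)
  | andE1 {Γ φ ψ} : DerP Γ (.and φ ψ) → DerP Γ φ
  | andE2 {Γ φ ψ} : DerP Γ (.and φ ψ) → DerP Γ ψ
  | impI {Γ ψ} (φ : Infon) : DerP Γ ψ → DerP Γ (.imp φ ψ)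
  | impE {Γ φ ψ} : DerP Γ φ → DerP Γ (.imp φ ψ) → DerP Γ ψ

/-- Derivability in P[⊥_w]: P plus the weak ⊥-elimination rule. -/
inductive DerW : Set Infon → Infon → Prop
  | top (Γ : Set Infon) : DerW Γ .top
  | id (φ : Infon) : DerW {φ} φ
  | weak {Γ φ} (Δ : Set Infon) : DerW Γ φ → DerW (Γ ∪ Δ) φ
  | cut {Γ φ ψ} : DerW Γ φ → DerW (insert φ Γ) ψ → DerW Γ ψ
  | andI {Γ φ ψ} : DerW Γ φ → DerW Γ ψ → DerW Γ (.and φ ψ)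
  | andE1 {Γ φ ψ} : DerW Γ (.and φ ψ) → DerW Γ φ
  | andE2 {Γ φ ψ} : DerW Γ (.and φ ψ) → DerW Γ ψ
  | impI {Γ ψ} (φ : Infon) : DerW Γ ψ → DerW Γ (.imp φ ψ)
  | impE {Γ φ ψ} : DerW Γ φ → DerW Γ (.imp φ ψ) → DerW Γ ψ
  | botEw {Γ φ ψ} : DerW Γ .bot → DerW Γ (.imp φ ψ) → DerW Γ ψ

/-- Positive atoms of an infon. -/
def posAt : Infon → Set Infon
  | .and φ ψ => posAt φ ∪ posAt ψ
  | .imp _ ψ => posAt ψ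
  | φ => {φ}

/-- Positive atoms of a context. -/
def posCtx (Γ : Set Infon) : Set Infon := ⋃ φ ∈ Γ, posAt φ

/-- Derivability in P[⊥]: P plus full ⊥-elimination. -/
inductive DerB : Set Infon → Infon → Prop
  | top (Γ : Set Infon) : DerB Γ .top
  | id (φ : Infon) : DerB {φ} φ
  | weak {Γ φ} (Δ : Set Infon) : DerB Γ φ → DerB (Γ ∪ Δ) φ
  | cut {Γ φ ψ} : DerB Γ φ → DerB (insert φ Γ) ψ → DerB Γ ψ
  | andI {Γ φ ψ} : DerB Γ φ → DerB Γ ψ → DerB Γ (.and φ ψ)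
  | andE1 {Γ φ ψ} : DerB Γ (.and φ ψ) → DerB Γ φ
  | andE2 {Γ φ ψ} : DerB Γ (.and φ ψ) → DerB Γ ψ
  | impI {Γ ψ} (φ : Infon) : DerB Γ ψ → DerB Γ (.imp φ ψ)
  | impE {Γ φ ψ} : DerB Γ φ → DerB Γ (.imp φ ψ) → DerB Γ ψ
  | botE {Γ} (φ : Infon) : DerB Γ .bot → DerB Γ φ

/-- Strings over the alphabet Σ ∪ {ff}: the letter `none` is the extra letter ff. -/
abbrev StrB := List (Option Bool)

/-- The one-letter string ff. -/
def ffStr : StrB := [none]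

/-- An infon algebra over strings in the alphabet Σ ∪ {ff}. -/
structure InfonAlgebraB where
  pi : StrB → StrB → StrB
  l : StrB → Option StrB
  r : StrB → Option StrB
  enc : StrB → StrB → StrB
  dec : StrB → StrB → Option StrB
  E : Set StrB
  E_nonempty : E.Nonempty
  E_binary : ∀ x ∈ E, ∀ c ∈ x, c ≠ none
  l_pi : ∀ x y, l (pi x y) = some x
  r_pi : ∀ x y, r (pi x y) = some y
  dec_enc : ∀ x y, dec x (enc x y) = some y

/-- An interpretation: evaluation of infons with v(⊥) = ff, v(⊤) ∈ E,
∧ evaluated by pairing and primal → by encryption; atoms and ⊤ get binary strings. -/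
structure InterpB (A : InfonAlgebraB) where
  v : Infon → StrB
  v_top : v .top ∈ A.E
  v_bot : v .bot = ffStr
  v_atom : ∀ n, ∀ c ∈ v (.atom n), c ≠ none
  v_and : ∀ φ ψ, v (.and φ ψ) = A.pi (v φ) (v ψ)
  v_imp : ∀ φ ψ, v (.imp φ ψ) = A.enc (v φ) (v ψ)

/-- The basic closure conditions on M (conditions for P-connectives). -/
def BaseClosed (A : InfonAlgebraB) (M : Set StrB) : Prop :=
  A.E ⊆ M ∧
  (∀ a b, (a ∈ M ∧ b ∈ M) ↔ A.pi a b ∈ M) ∧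
  (∀ a b, a ∈ M → A.enc a b ∈ M → b ∈ M) ∧
  (∀ a b, b ∈ M → A.enc a b ∈ M)

/-- Closure for P[⊥]-models: base conditions plus: ff ∈ M implies a ∈ M for every string a. -/
def ClosedSuper (A : InfonAlgebraB) (M : Set StrB) : Prop :=
  BaseClosed A M ∧ (ffStr ∈ M → ∀ a : StrB, a ∈ M)

/-- Soundness of P[⊥] for superuser models. -/
theorem superuser_soundness (Γ : Set Infon) (φ : Infon) (h : DerB Γ φ)
    (A : InfonAlgebraB) (I : InterpB A) (M : Set StrB) (hM : ClosedSuper A M)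
    (hΓ : ∀ ψ ∈ Γ, I.v ψ ∈ M) : I.v φ ∈ M := by
  obtain ⟨⟨hE, hpi, hdec, henc⟩, hff⟩ := hM
  induction h with
  | top Γ => exact hE I.v_top
  | id φ => exact hΓ φ rfl
  | weak Δ h ih => exact ih fun ψ hψ => hΓ ψ (Set.mem_union_left _ hψ)
  | cut h1 h2 ih1 ih2 =>
      exact ih2 (fun ψ hψ => by
        rcases hψ with rfl | hψ
        · exact ih1 hΓ
        · exact hΓ ψ hψ) 
  | andI h1 h2 ih1 ih2 =>
      rw [I.v_and]; exact (hpi _ _).1 ⟨ih1 hΓ, ih2 hΓ⟩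
  | andE1 h ih => exact ((hpi _ _).2 (by rw [← I.v_and]; exact ih hΓ)).1
  | andE2 h ih => exact ((hpi _ _).2 (by rw [← I.v_and]; exact ih hΓ)).2
  | impI φ h ih => rw [I.v_imp]; exact henc _ _ (ih hΓ)
  | impE h1 h2 ih1 ih2 =>
      exact hdec _ _ (ih1 hΓ) (by rw [← I.v_imp]; exact ih2 hΓ)
  | botE φ h ih =>
      exact hff (by rw [← I.v_bot]; exact ih hΓ) _
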